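/- For every integer n ≥ 1, the commutator of the Dirac operator with the diagonal representation of KⁿLⁿ has operator norm one: ‖[D, π(KⁿLⁿ)]‖ = 1. -/

import Mathlib

open MeasureTheory ContinuousLinearMap
open scoped RealInnerProductSpace InnerProductSpace ENNReal

noncomputable section

/-- The shift space `Ω = {0,1}^ℕ`, with `false` playing the role of the symbol `0`
and `true` of the symbol `1`. -/
abbrev Ω : Type := ℕ → Bool

/-- The shift map `σ`, `σ(x)ₙ = x_{n+1}`. -/
def shiftMap : Ω → Ω := fun x n => x (n + 1)

/-- Prepending a symbol: `consSeq a x = ax`. -/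
def consSeq (a : Bool) (x : Ω) : Ω := fun n => Nat.casesOn n a (fun k => x k)

/-- The cylinder set `[w]` of sequences beginning with the finite word `w`. -/
def cylinder (w : List Bool) : Set Ω := {x | ∀ i : Fin w.length, x (i : ℕ) = w.get i}

/-- The Hilbert space `L²(μ)` (real). -/
abbrev E (μ : Measure Ω) := Lp (α := Ω) ℝ 2 μ

/-- The Hilbert space `H = L²(μ) × L²(μ)` with the norm `√(‖φ‖² + ‖ψ‖²)`. -/
abbrev HS (μ : Measure Ω) := WithLp 2 (E μ × E μ)

variable {μ : Measure Ω}

/-- The diagonal block operator `(φ, ψ) ↦ (A₁φ, A₂ψ)` on `H`. -/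
def blockDiag (A₁ A₂ : E μ →L[ℝ] E μ) : HS μ →L[ℝ] HS μ :=
  ((WithLp.prodContinuousLinearEquiv 2 ℝ (E μ) (E μ)).symm.toContinuousLinearMap).comp
    (((A₁.comp (ContinuousLinearMap.fst ℝ (E μ) (E μ))).prod
        (A₂.comp (ContinuousLinearMap.snd ℝ (E μ) (E μ)))).comp
      (WithLp.prodContinuousLinearEquiv 2 ℝ (E μ) (E μ)).toContinuousLinearMap)

/-- The antidiagonal block operator `(φ, ψ) ↦ (A₁ψ, A₂φ)` on `H`. -/
def blockAntidiag (A₁ A₂ : E μ →L[ℝ] E μ) : HS μ →L[ℝ] HS μ :=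
  ((WithLp.prodContinuousLinearEquiv 2 ℝ (E μ) (E μ)).symm.toContinuousLinearMap).comp
    (((A₁.comp (ContinuousLinearMap.snd ℝ (E μ) (E μ))).prod
        (A₂.comp (ContinuousLinearMap.fst ℝ (E μ) (E μ)))).comp
      (WithLp.prodContinuousLinearEquiv 2 ℝ (E μ) (E μ)).toContinuousLinearMap)

/-- The diagonal representation `π(A)(φ,ψ) = (Aφ, Aψ)`. -/
def diagRep (A : E μ →L[ℝ] E μ) : HS μ →L[ℝ] HS μ := blockDiag A A

/-- The Dirac operator `D(φ,ψ) = (Kψ, Lφ)` associated with the pair `(K, L)`. -/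
def dirac (K L : E μ →L[ℝ] E μ) : HS μ →L[ℝ] HS μ := blockAntidiag K L

/-- The commutator `[D, π(A)]`. -/
def commD (K L A : E μ →L[ℝ] E μ) : HS μ →L[ℝ] HS μ :=
  (dirac K L).comp (diagRep A) - (diagRep A).comp (dirac K L)

/-- The rank-one orthogonal projection onto the span of the unit vector `ψ`:
`φ ↦ ⟪ψ, φ⟫ • ψ`. -/
def rankOneProj (ψ : E μ) : E μ →L[ℝ] E μ := (innerSL ℝ ψ).smulRight ψ

/-- The Haar-basis element `e_w = 2^{ℓ(w)/2} (χ_{[w1]} - χ_{[w0]})`, as a function on `Ω`. -/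
def haarFun (w : List Bool) : Ω → ℝ := fun x =>
  (2 : ℝ) ^ ((w.length : ℝ) / 2) *
    ((cylinder (w ++ [true])).indicator 1 x - (cylinder (w ++ [false])).indicator 1 x)

lemma continuous_shiftMap : Continuous shiftMap :=
  continuous_pi fun n => continuous_apply (n + 1)

lemma continuous_consSeq (a : Bool) : Continuous (consSeq a) := by
  apply continuous_pi
  intro n
  cases n with
  | zero => exact continuous_const
  | succ k => exact continuous_apply k

/-- The Koopman operator on continuous functions: `f ↦ f ∘ σ`. -/
def koopmanC (f : C(Ω, ℝ)) : C(Ω, ℝ) := f.comp ⟨shiftMap, continuous_shiftMap⟩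

/-- The Ruelle operator on continuous functions: `(Lf)(x) = (f(0x) + f(1x))/2`. -/
def ruelleC (f : C(Ω, ℝ)) : C(Ω, ℝ) :=
  ⟨fun x => (f (consSeq false x) + f (consSeq true x)) / 2,
    ((f.continuous.comp (continuous_consSeq false)).add
      (f.continuous.comp (continuous_consSeq true))).div_const 2⟩

namespace Stmt10Aux

lemma measurable_consSeq (a : Bool) : Measurable (consSeq a) := by
  apply measurable_pi_iff.mpr
  intro n
  cases n with
  | zero => exact measurable_const
  | succ k => exact measurable_pi_apply k

lemma measurableSet_cylinder (w : List Bool) : MeasurableSet (cylinder w) := by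
  have h : cylinder w = ⋂ i : Fin w.length, (fun x : Ω => x (i : ℕ)) ⁻¹' {w.get i} := by
    ext x
    rw [Set.mem_iInter]
    exact Iff.rfl
  rw [h]
  exact MeasurableSet.iInter fun i =>
    (measurable_pi_apply (i : ℕ)) (measurableSet_singleton _)

lemma cylinder_nil : cylinder ([] : List Bool) = Set.univ :=
  Set.eq_univ_iff_forall.mpr (fun x i => i.elim0)

lemma mem_cylinder_cons {b : Bool} {w : List Bool} {x : Ω} :
    x ∈ cylinder (b :: w) ↔ x 0 = b ∧ (fun n => x (n + 1)) ∈ cylinder w := by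
  constructor
  · intro h
    exact ⟨h ⟨0, Nat.succ_pos _⟩, fun i => h i.succ⟩
  · rintro ⟨h0, h1⟩ i
    match i with
    | ⟨0, _⟩ => exact h0
    | ⟨k + 1, hk⟩ => exact h1 ⟨k, Nat.lt_of_succ_lt_succ hk⟩

lemma preimage_consSeq_cylinder (a b : Bool) (w : List Bool) :
    consSeq a ⁻¹' cylinder (b :: w) = if a = b then cylinder w else ∅ := by
  ext x
  have hx : (fun n => consSeq a x (n + 1)) = x := rfl
  have h0 : consSeq a x 0 = a := rfl
  by_cases hab : a = b
  · subst hab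
    rw [if_pos rfl]
    simp [Set.mem_preimage, mem_cylinder_cons, hx, h0]
  · rw [if_neg hab]
    simp [Set.mem_preimage, mem_cylinder_cons, hx, h0, hab]

lemma cylinder_cons_inter (a b : Bool) (w : List Bool) :
    cylinder (b :: w) ∩ cylinder [a] = if a = b then cylinder (b :: w) else ∅ := by
  ext x
  have h1 : x ∈ cylinder [a] ↔ x 0 = a := by
    rw [mem_cylinder_cons]
    simp [cylinder_nil]
  by_cases hab : a = b
  · subst hab
    rw [if_pos rfl]
    simp only [Set.mem_inter_iff, h1, mem_cylinder_cons]
    tauto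
  · rw [if_neg hab]
    simp only [Set.mem_inter_iff, h1, mem_cylinder_cons, Set.mem_empty_iff_false, iff_false,
      not_and]
    rintro ⟨h2, _⟩ h3
    exact hab (h3.symm.trans h2)

lemma cylinder_subset_of_le {w v : List Bool} (h : w.length ≤ v.length) {x : Ω}
    (hxw : x ∈ cylinder w) (hxv : x ∈ cylinder v) : cylinder v ⊆ cylinder w := by
  intro y hy i
  have hi : (i : ℕ) < v.length := lt_of_lt_of_le i.isLt h
  calc y (i : ℕ) = v.get ⟨i, hi⟩ := hy ⟨i, hi⟩
    _ = x (i : ℕ) := (hxv ⟨i, hi⟩).symm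
    _ = w.get i := hxw i

lemma isPiSystem_cylinders : IsPiSystem (Set.range (cylinder : List Bool → Set Ω)) := by
  rintro _ ⟨w, rfl⟩ _ ⟨v, rfl⟩ hne
  obtain ⟨x, hxw, hxv⟩ := hne
  rcases le_total w.length v.length with h | h
  · have hsub := cylinder_subset_of_le h hxw hxv
    exact ⟨v, (Set.inter_eq_self_of_subset_right hsub).symm⟩
  · have hsub := cylinder_subset_of_le h hxv hxw
    exact ⟨w, (Set.inter_eq_self_of_subset_left hsub).symm⟩

lemma generateFrom_cylinders :
    MeasurableSpace.generateFrom (Set.range (cylinder : List Bool → Set Ω)) =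
      (inferInstance : MeasurableSpace Ω) := by
  apply le_antisymm
  · exact MeasurableSpace.generateFrom_le
      (by rintro _ ⟨w, rfl⟩; exact measurableSet_cylinder w)
  · have key : ∀ (i : ℕ) (b : Bool),
        MeasurableSet[MeasurableSpace.generateFrom
          (Set.range (cylinder : List Bool → Set Ω))] {x : Ω | x i = b} := by
      intro i b
      have hset : {x : Ω | x i = b} =
          ⋃ (c : Fin (i + 1) → Bool) (_ : c ⟨i, Nat.lt_succ_self i⟩ = b),
            _root_.cylinder (List.ofFn c) := by
        ext x
        simp only [Set.mem_iUnion, Set.mem_setOf_eq]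
        constructor
        · intro hx
          refine ⟨fun j => x (j : ℕ), hx, fun j => ?_⟩
          show x (j : ℕ) = (List.ofFn fun j : Fin (i + 1) => x (j : ℕ)).get j
          rw [List.get_ofFn]
          rfl
        · rintro ⟨c, hc, hx⟩
          have hi : (i : ℕ) < (List.ofFn c).length := by simp
          have h3 := hx ⟨i, hi⟩
          rw [List.get_ofFn] at h3
          exact h3.trans hc
      rw [hset]
      exact MeasurableSet.iUnion fun c => MeasurableSet.iUnion fun _ =>
        MeasurableSpace.measurableSet_generateFrom ⟨_, rfl⟩
    have heval : ∀ i : ℕ, @Measurable Ω Bool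
        (MeasurableSpace.generateFrom (Set.range (_root_.cylinder : List Bool → Set Ω))) _
        (fun x => x i) := by
      intro i s _
      have hs2 : (fun x : Ω => x i) ⁻¹' s = ⋃ b ∈ s, {x : Ω | x i = b} := by
        ext x; simp
      rw [hs2]
      exact MeasurableSet.biUnion (Set.to_countable s) fun b _ => key i b
    have hmeas : @Measurable Ω Ω
        (MeasurableSpace.generateFrom (Set.range (_root_.cylinder : List Bool → Set Ω)))
        MeasurableSpace.pi id :=
      (@measurable_pi_iff Ω ℕ (fun _ => Bool)
        (MeasurableSpace.generateFrom (Set.range (_root_.cylinder : List Bool → Set Ω))) _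
        id).mpr heval
    exact fun s hs => hmeas hs

lemma map_consSeq {μ : Measure Ω} [IsProbabilityMeasure μ]
    (hμ : ∀ w : List Bool, μ (cylinder w) = (1 / 2) ^ w.length) (a : Bool) :
    Measure.map (consSeq a) μ = (2 : ℝ≥0∞) • μ.restrict (cylinder [a]) := by
  haveI := Measure.isProbabilityMeasure_map (μ := μ) (measurable_consSeq a).aemeasurable
  have h2 : (2 : ℝ≥0∞) * (1 / 2 : ℝ≥0∞) = 1 := by
    rw [one_div, ENNReal.mul_inv_cancel two_ne_zero ENNReal.ofNat_ne_top]
  refine ext_of_generate_finite _ generateFrom_cylinders.symm isPiSystem_cylinders ?_ ?_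
  · rintro _ ⟨w, rfl⟩
    rw [Measure.map_apply (measurable_consSeq a) (measurableSet_cylinder w),
      Measure.smul_apply, Measure.restrict_apply (measurableSet_cylinder w), smul_eq_mul]
    cases w with
    | nil =>
      rw [cylinder_nil, Set.preimage_univ, Set.univ_inter, hμ, measure_univ]
      simp only [List.length_cons, List.length_nil, zero_add, pow_one]
      exact h2.symm
    | cons b w' =>
      rw [preimage_consSeq_cylinder, cylinder_cons_inter]
      by_cases hab : a = b
      · rw [if_pos hab, if_pos hab, hμ, hμ]
        rw [List.length_cons, pow_succ, ← mul_assoc, mul_comm (2 : ℝ≥0∞), mul_assoc, h2,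
          mul_one]
      · rw [if_neg hab, if_neg hab, measure_empty, mul_zero]
  · rw [Measure.map_apply (measurable_consSeq a) MeasurableSet.univ, Set.preimage_univ,
      Measure.smul_apply, Measure.restrict_apply MeasurableSet.univ, Set.univ_inter,
      smul_eq_mul, hμ, measure_univ]
    simp only [List.length_cons, List.length_nil, zero_add, pow_one]
    exact h2.symm

lemma qmp {μ : Measure Ω} [IsProbabilityMeasure μ]
    (hμ : ∀ w : List Bool, μ (cylinder w) = (1 / 2) ^ w.length) (a : Bool) :
    Measure.QuasiMeasurePreserving (consSeq a) μ μ := by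
  refine ⟨measurable_consSeq a, ?_⟩
  rw [map_consSeq hμ a]
  intro s hs
  simp only [Measure.smul_apply, smul_eq_mul]
  have hle : μ.restrict (cylinder [a]) s ≤ μ s := Measure.le_iff'.mp Measure.restrict_le_self s
  rw [le_antisymm (hle.trans_eq hs) zero_le, mul_zero]

end Stmt10Aux

end

set_option maxHeartbeats 1000000 in
/-- For every `n ≥ 1`, `‖[D, π(KⁿLⁿ)]‖ = 1`. -/
theorem stmt10
    (μ : Measure Ω) [IsProbabilityMeasure μ]
    (hμ : ∀ w : List Bool, μ (cylinder w) = (1 / 2) ^ w.length)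
    (K L : E μ →L[ℝ] E μ)
    (hK : ∀ g : E μ, (K g : Ω → ℝ) =ᵐ[μ] fun x => g (shiftMap x))
    (hL : ∀ g : E μ, (L g : Ω → ℝ) =ᵐ[μ]
      fun x => (g (consSeq false x) + g (consSeq true x)) / 2)
    (hadj : ContinuousLinearMap.adjoint K = L)
    (hLK : L ∘L K = ContinuousLinearMap.id ℝ (E μ))
    (n : ℕ) (hn : 1 ≤ n) :
    ‖commD K L ((K ^ n) ∘L (L ^ n))‖ = 1 := by
  classical
  obtain ⟨m, rfl⟩ : ∃ m, n = m + 1 := ⟨n - 1, by omega⟩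
  -- basic operator facts
  have hLKapp : ∀ y : E μ, L (K y) = y := fun y => by
    have := DFunLike.congr_fun hLK y
    simpa using this
  have hKin : ∀ g h : E μ, ⟪K g, K h⟫_ℝ = ⟪g, h⟫_ℝ := by
    intro g h
    have h1 : ⟪g, ContinuousLinearMap.adjoint K (K h)⟫_ℝ = ⟪K g, K h⟫_ℝ :=
      ContinuousLinearMap.adjoint_inner_right K g (K h)
    rw [hadj, hLKapp] at h1
    exact h1.symm
  have hKiso : ∀ g : E μ, ‖K g‖ = ‖g‖ := by
    intro g
    have h1 := hKin g g
    rw [real_inner_self_eq_norm_sq, real_inner_self_eq_norm_sq] at h1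
    nlinarith [norm_nonneg (K g), norm_nonneg g]
  have hKpow : ∀ (j : ℕ) (g : E μ), ‖(K ^ j) g‖ = ‖g‖ := by
    intro j
    induction j with
    | zero => intro g; simp
    | succ k ih =>
      intro g
      rw [pow_succ', ContinuousLinearMap.mul_apply, hKiso, ih]
  have hadjL : ∀ (g x : E μ), ⟪g, K x⟫_ℝ = ⟪L g, x⟫_ℝ := by
    intro g x
    rw [← hadj]
    exact (ContinuousLinearMap.adjoint_inner_left K x g).symm
  have hLle : ∀ g : E μ, ‖L g‖ ≤ ‖g‖ := by
    intro g
    have h1 : ⟪L g, L g⟫_ℝ = ⟪g, K (L g)⟫_ℝ := (hadjL g (L g)).symm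
    rw [real_inner_self_eq_norm_sq] at h1
    have h2 := real_inner_le_norm g (K (L g))
    rw [hKiso] at h2
    nlinarith [norm_nonneg (L g), norm_nonneg g]
  have hLpow : ∀ (j : ℕ) (g : E μ), ‖(L ^ j) g‖ ≤ ‖g‖ := by
    intro j
    induction j with
    | zero => intro g; simp
    | succ k ih =>
      intro g
      rw [pow_succ', ContinuousLinearMap.mul_apply]
      exact (hLle _).trans (ih g)
  have hQle : ∀ g : E μ, ‖g - K (L g)‖ ≤ ‖g‖ := by
    intro g
    set q := g - K (L g) with hq
    have hLq : L q = 0 := by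
      rw [hq, map_sub, hLKapp, sub_self]
    have horth : ⟪q, K (L g)⟫_ℝ = 0 := by
      rw [hadjL, hLq, inner_zero_left]
    have h1 : ⟪q, q⟫_ℝ = ⟪q, g⟫_ℝ := by
      rw [hq]
      rw [inner_sub_right, ← hq, horth, sub_zero]
    rw [real_inner_self_eq_norm_sq] at h1
    have h2 := real_inner_le_norm q g
    nlinarith [norm_nonneg q, norm_nonneg g]
  have hLmKm : ∀ (j : ℕ) (g : E μ), (L ^ j) ((K ^ j) g) = g := by
    intro j
    induction j with
    | zero => intro g; simp
    | succ k ih =>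
      intro g
      rw [pow_succ L, pow_succ' K, ContinuousLinearMap.mul_apply,
        ContinuousLinearMap.mul_apply, hLKapp, ih]
  set P : E μ →L[ℝ] E μ := (K ^ (m + 1)) ∘L (L ^ (m + 1)) with hP
  -- key algebraic identities
  have hKcomm : ∀ z : E μ, K ((K ^ (m + 1)) z) = (K ^ (m + 1)) (K z) := by
    intro z
    calc K ((K ^ (m + 1)) z) = (K ^ (m + 2)) z := by
          rw [pow_succ' K (m + 1), ContinuousLinearMap.mul_apply]
      _ = (K ^ (m + 1)) (K z) := by
          rw [pow_succ K (m + 1), ContinuousLinearMap.mul_apply]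
  have keyA1 : ∀ y : E μ, K (P y) - P (K y) =
      (K ^ (m + 1)) (K (L ((L ^ m) y)) - (L ^ m) y) := by
    intro y
    rw [hP]
    simp only [ContinuousLinearMap.comp_apply]
    rw [map_sub]
    congr 1
    · rw [show (L ^ (m + 1)) y = L ((L ^ m) y) by
        rw [pow_succ' L m, ContinuousLinearMap.mul_apply], hKcomm]
    · congr 1
      rw [pow_succ L m, ContinuousLinearMap.mul_apply, hLKapp]
  have keyA2 : ∀ y : E μ, L (P y) - P (L y) =
      (K ^ m) ((L ^ (m + 1)) y - K (L ((L ^ (m + 1)) y))) := by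
    intro y
    rw [hP]
    simp only [ContinuousLinearMap.comp_apply]
    rw [map_sub]
    congr 1
    · rw [show (K ^ (m + 1)) ((L ^ (m + 1)) y) = K ((K ^ m) ((L ^ (m + 1)) y)) by
        rw [pow_succ' K m, ContinuousLinearMap.mul_apply], hLKapp]
    · have h1 : (L ^ (m + 1)) (L y) = L ((L ^ (m + 1)) y) := by
        have e1 : (L ^ (m + 1)) (L y) = (L ^ (m + 2)) y := by
          rw [pow_succ L (m + 1), ContinuousLinearMap.mul_apply]
        have e2 : (L ^ (m + 2)) y = L ((L ^ (m + 1)) y) := by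
          rw [pow_succ' L (m + 1), ContinuousLinearMap.mul_apply]
        rw [e1, e2]
      rw [h1, pow_succ K m, ContinuousLinearMap.mul_apply]
  -- evaluation of the commutator
  have hcomm : ∀ x : HS μ, commD K L P x =
      (WithLp.equiv 2 (E μ × E μ)).symm
        (K (P x.snd) - P (K x.snd), L (P x.fst) - P (L x.fst)) := fun x => rfl
  have hnormsq : ∀ a b : E μ, ‖(WithLp.equiv 2 (E μ × E μ)).symm (a, b)‖ ^ 2
      = ‖a‖ ^ 2 + ‖b‖ ^ 2 := by
    intro a b
    rw [WithLp.prod_norm_sq_eq_of_L2]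
    rfl
  have hxsq : ∀ x : HS μ, ‖x‖ ^ 2 = ‖x.fst‖ ^ 2 + ‖x.snd‖ ^ 2 := fun x =>
    WithLp.prod_norm_sq_eq_of_L2 x
  have hA1le : ∀ y : E μ, ‖K (P y) - P (K y)‖ ≤ ‖y‖ := by
    intro y
    rw [keyA1, hKpow]
    calc ‖K (L ((L ^ m) y)) - (L ^ m) y‖ = ‖(L ^ m) y - K (L ((L ^ m) y))‖ :=
          norm_sub_rev _ _
      _ ≤ ‖(L ^ m) y‖ := hQle _
      _ ≤ ‖y‖ := hLpow m y
  have hA2le : ∀ y : E μ, ‖L (P y) - P (L y)‖ ≤ ‖y‖ := by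
    intro y
    rw [keyA2, hKpow]
    exact (hQle _).trans (hLpow (m + 1) y)
  have hub : ‖commD K L P‖ ≤ 1 := by
    refine ContinuousLinearMap.opNorm_le_bound _ zero_le_one (fun x => ?_)
    rw [one_mul, hcomm]
    have h1 := hnormsq (K (P x.snd) - P (K x.snd)) (L (P x.fst) - P (L x.fst))
    have h2 := hxsq x
    nlinarith [hA1le x.snd, hA2le x.fst, norm_nonneg x,
      norm_nonneg ((WithLp.equiv 2 (E μ × E μ)).symm
        (K (P x.snd) - P (K x.snd), L (P x.fst) - P (L x.fst))),
      norm_nonneg x.fst, norm_nonneg x.snd, norm_nonneg (K (P x.snd) - P (K x.snd)),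
      norm_nonneg (L (P x.fst) - P (L x.fst))]
  -- the witness u
  set f : Ω → ℝ := fun x => if x 0 then 1 else -1 with hfdef
  have hfm : Measurable f :=
    Measurable.comp (f := fun x : Ω => x 0) (g := fun b : Bool => if b then (1 : ℝ) else -1)
      measurable_from_top (measurable_pi_apply 0)
  have hfb : ∀ x, ‖f x‖ = 1 := by
    intro x
    by_cases h : x 0 <;> simp [hfdef, h]
  have hmem : MemLp f 2 μ :=
    MemLp.of_bound hfm.aestronglyMeasurable 1 (Filter.Eventually.of_forall fun x => (hfb x).le)
  set u : E μ := hmem.toLp f with hu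
  have hucoe : (u : Ω → ℝ) =ᵐ[μ] f := MemLp.coeFn_toLp hmem
  have hnormu : ‖u‖ = 1 := by
    rw [hu, Lp.norm_toLp]
    have h1 : eLpNorm f 2 μ = 1 := by
      rw [eLpNorm_congr_norm_ae (g := fun _ : Ω => (1 : ℝ))
        (Filter.Eventually.of_forall fun x => by simp [hfb x]),
        eLpNorm_const _ two_ne_zero (IsProbabilityMeasure.ne_zero μ)]
      simp
    rw [h1, ENNReal.toReal_one]
  have hLu : L u = 0 := by
    have hcomp : ∀ a : Bool, (fun x => (u : Ω → ℝ) (consSeq a x)) =ᵐ[μ]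
        (fun x => f (consSeq a x)) := by
      intro a
      exact (Stmt10Aux.qmp hμ a).ae_eq_comp hucoe
    have h1 : (L u : Ω → ℝ) =ᵐ[μ] fun _ => (0 : ℝ) := by
      refine (hL u).trans ?_
      filter_upwards [hcomp false, hcomp true] with x h2 h3
      rw [h2, h3]
      have e0 : f (consSeq false x) = -1 := rfl
      have e1 : f (consSeq true x) = 1 := rfl
      rw [e0, e1]
      norm_num
    exact Lp.ext (h1.trans (Lp.coeFn_zero ℝ 2 μ).symm)
  -- the lower bound
  set xx : HS μ := (WithLp.equiv 2 (E μ × E μ)).symm (0, (K ^ m) u) with hxx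
  have hxxfst : xx.fst = (0 : E μ) := rfl
  have hxxsnd : xx.snd = (K ^ m) u := rfl
  have hxxnorm : ‖xx‖ = 1 := by
    have h1 : ‖xx‖ ^ 2 = 1 := by
      rw [hxsq, hxxfst, hxxsnd, hKpow, hnormu]
      simp
    nlinarith [norm_nonneg xx]
  have hTxx : ‖commD K L P xx‖ = 1 := by
    rw [hcomm, hxxfst, hxxsnd]
    have e1 : K (P ((K ^ m) u)) - P (K ((K ^ m) u)) = (K ^ (m + 1)) (-u) := by
      rw [keyA1, hLmKm, hLu, map_zero, zero_sub]
    have e2 : L (P (0 : E μ)) - P (L (0 : E μ)) = 0 := by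
      simp
    rw [e1, e2]
    have h1 : ‖(WithLp.equiv 2 (E μ × E μ)).symm ((K ^ (m + 1)) (-u), (0 : E μ))‖ ^ 2 = 1 := by
      rw [hnormsq, hKpow, norm_neg, hnormu]
      simp
    nlinarith [norm_nonneg ((WithLp.equiv 2 (E μ × E μ)).symm ((K ^ (m + 1)) (-u), (0 : E μ)))]
  have hlb : 1 ≤ ‖commD K L P‖ := by
    have h1 := (commD K L P).le_opNorm xx
    rw [hTxx, hxxnorm, mul_one] at h1
    exact h1
  exact le_antisymm hub hlb
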